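/- Let A ∈ ℝ^{n×n} be Schur stable, B ∈ ℝ^{n×m}, and suppose Σ = (1/2π)∫_{-π}^π G(e^{iθ}) Φ(e^{iθ}) G(e^{iθ})* dθ for some integrable Hermitian matrix-valued function Φ on the circle, where G(z) = z(zI−A)^{-1}B. Then there exists H ∈ ℂ^{m×n} such that Σ − AΣA' = BH + H*B'. -/

import Mathlib

open Matrix Real

noncomputable def Gfil {n m : ℕ} (A : Matrix (Fin n) (Fin n) ℝ)
    (B : Matrix (Fin n) (Fin m) ℝ) (z : ℂ) : Matrix (Fin n) (Fin m) ℂ :=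
  z • (z • (1 : Matrix (Fin n) (Fin n) ℂ) - A.map Complex.ofReal)⁻¹ * B.map Complex.ofReal

/-- If every covector annihilating `B₀` annihilates `X`, then `X = B₀ * H` for some `H`. -/
lemma factor_through_matrix {m n : ℕ} (B₀ : Matrix (Fin n) (Fin m) ℂ)
    (X : Matrix (Fin n) (Fin n) ℂ)
    (h : ∀ u : Fin n → ℂ, u ᵥ* B₀ = 0 → u ᵥ* X = 0) :
    ∃ H : Matrix (Fin m) (Fin n) ℂ, X = B₀ * H := by
  classical
  set f : (Fin n → ℂ) →ₗ[ℂ] (Fin m → ℂ) := B₀.vecMulLinear with hf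
  set g : (Fin n → ℂ) →ₗ[ℂ] (Fin n → ℂ) := X.vecMulLinear with hg
  have hker : LinearMap.ker f ≤ LinearMap.ker g := by
    intro u hu
    rw [LinearMap.mem_ker] at hu ⊢
    simpa [hg] using h u (by simpa [hf] using hu)
  obtain ⟨q, hq⟩ := (LinearMap.range f).exists_isCompl
  obtain ⟨σ, hσ⟩ :=
    f.rangeRestrict.exists_rightInverse_of_surjective f.range_rangeRestrict
  set proj := (LinearMap.range f).projectionOnto q hq with hproj
  set h' : (Fin m → ℂ) →ₗ[ℂ] (Fin n → ℂ) := g ∘ₗ σ ∘ₗ (proj : _ →ₗ[ℂ] _) with hh'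
  have hσf : ∀ v : LinearMap.range f, f (σ v) = (v : Fin m → ℂ) := by
    intro v
    have := congrArg (fun (T : LinearMap.range f →ₗ[ℂ] LinearMap.range f) => T v) hσ
    simpa [LinearMap.rangeRestrict] using congrArg Subtype.val this
  have hfac : ∀ u, h' (f u) = g u := by
    intro u
    have h1 : proj (f u) = ⟨f u, LinearMap.mem_range_self f u⟩ := by
      simpa [hproj] using Submodule.linearProjOfIsCompl_apply_left hq
        (⟨f u, LinearMap.mem_range_self f u⟩ : LinearMap.range f)
    have h2 : f (σ ⟨f u, LinearMap.mem_range_self f u⟩) = f u :=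
      hσf ⟨f u, LinearMap.mem_range_self f u⟩
    have h3 : σ ⟨f u, LinearMap.mem_range_self f u⟩ - u ∈ LinearMap.ker f := by
      rw [LinearMap.mem_ker, map_sub, h2, sub_self]
    have h4 : g (σ ⟨f u, LinearMap.mem_range_self f u⟩ - u) = 0 := hker h3
    rw [map_sub, sub_eq_zero] at h4
    simp only [hh', LinearMap.comp_apply, h1]
    exact h4
  refine ⟨Matrix.of fun i j => h' (Pi.single i 1) j, ?_⟩
  have hrow : ∀ (v : Fin m → ℂ) (j : Fin n),
      h' v j = ∑ k, v k * h' (Pi.single k 1) j := by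
    intro v j
    have hv : v = ∑ k, v k • (Pi.single k (1 : ℂ) : Fin m → ℂ) := by
      ext j'
      simp [Pi.single_apply, Finset.sum_apply]
    calc h' v j = h' (∑ k, v k • (Pi.single k (1 : ℂ) : Fin m → ℂ)) j := by rw [← hv]
      _ = ∑ k, v k * h' (Pi.single k 1) j := by
          rw [map_sum]
          simp [Finset.sum_apply]
  ext p j
  have hXp : X p = g (Pi.single p 1) := by
    simp [hg, Matrix.single_one_vecMul]
    rfl
  have hBp : (B₀ p : Fin m → ℂ) = f (Pi.single p 1) := by
    simp [hf, Matrix.single_one_vecMul]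
    rfl
  calc X p j = g (Pi.single p 1) j := by rw [hXp]
    _ = h' (f (Pi.single p 1)) j := (congrFun (hfac (Pi.single p 1)) j).symm
    _ = h' (B₀ p) j := by rw [← hBp]
    _ = ∑ k, B₀ p k * h' (Pi.single k 1) j := hrow _ _
    _ = (B₀ * Matrix.of fun i j => h' (Pi.single i 1) j) p j := by
          simp [Matrix.mul_apply]

/-- Abstract algebraic identity behind the key pointwise factorization. -/
lemma key_alg {n m : ℕ} (𝔸 N W : Matrix (Fin n) (Fin n) ℂ)
    (𝔹 : Matrix (Fin n) (Fin m) ℂ) (P : Matrix (Fin m) (Fin n) ℂ) (z : ℂ)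
    (hzz : (starRingEnd ℂ) z * z = 1)
    (hN : N = z • (1 : Matrix (Fin n) (Fin n) ℂ) - 𝔸)
    (hBP : 𝔹 * P = (starRingEnd ℂ) z • (N * W)) :
    𝔹 * ((2 : ℂ)⁻¹ • (P * (1 + z • 𝔸ᵀ))) =
      (2 : ℂ)⁻¹ • (W + z • (W * 𝔸ᵀ) - (starRingEnd ℂ) z • (𝔸 * W) - 𝔸 * W * 𝔸ᵀ) := by
  have hNW : N * W = z • W - 𝔸 * W := by
    rw [hN, Matrix.sub_mul, Matrix.smul_mul, Matrix.one_mul]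
  have h5 : (starRingEnd ℂ) z • (z • W - 𝔸 * W) = W - (starRingEnd ℂ) z • (𝔸 * W) := by
    rw [smul_sub, smul_smul, hzz, one_smul]
  have h6 : (W - (starRingEnd ℂ) z • (𝔸 * W)) * (1 + z • 𝔸ᵀ)
      = W + z • (W * 𝔸ᵀ) - (starRingEnd ℂ) z • (𝔸 * W) - 𝔸 * W * 𝔸ᵀ := by
    rw [Matrix.mul_add, Matrix.mul_one, Matrix.mul_smul, Matrix.sub_mul,
      Matrix.smul_mul, smul_sub, smul_smul, mul_comm z ((starRingEnd ℂ) z), hzz,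
      one_smul]
    abel
  calc 𝔹 * ((2 : ℂ)⁻¹ • (P * (1 + z • 𝔸ᵀ)))
      = (2 : ℂ)⁻¹ • (𝔹 * P * (1 + z • 𝔸ᵀ)) := by
        rw [Matrix.mul_smul, Matrix.mul_assoc]
    _ = (2 : ℂ)⁻¹ • (((starRingEnd ℂ) z • (z • W - 𝔸 * W)) * (1 + z • 𝔸ᵀ)) := by
        rw [hBP, hNW]
    _ = (2 : ℂ)⁻¹ • (W + z • (W * 𝔸ᵀ) - (starRingEnd ℂ) z • (𝔸 * W) - 𝔸 * W * 𝔸ᵀ) := by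
        rw [h5, h6]

/-- Abstract algebraic identity for the hermitian part. -/
lemma herm_alg {n : ℕ} (𝔸 W Y : Matrix (Fin n) (Fin n) ℂ) (z : ℂ)
    (hW : Wᴴ = W) (h𝔸T : (𝔸ᵀ)ᴴ = 𝔸) (h𝔸H : 𝔸ᴴ = 𝔸ᵀ)
    (hY : Y = (2 : ℂ)⁻¹ •
      (W + z • (W * 𝔸ᵀ) - (starRingEnd ℂ) z • (𝔸 * W) - 𝔸 * W * 𝔸ᵀ)) :
    Y + Yᴴ = W - 𝔸 * W * 𝔸ᵀ := by
  subst hY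
  simp only [Matrix.mul_assoc, Matrix.conjTranspose_smul, Matrix.conjTranspose_sub,
    Matrix.conjTranspose_add, Matrix.conjTranspose_mul, hW, h𝔸T, h𝔸H,
    Complex.star_def, map_inv₀, map_ofNat, Complex.conj_conj]
  module

theorem state_covariance_structure (n m : ℕ)
    (A : Matrix (Fin n) (Fin n) ℝ) (B : Matrix (Fin n) (Fin m) ℝ)
    (hA : ∀ μ ∈ spectrum ℂ (A.map (Complex.ofReal)), ‖μ‖ < 1)
    (Φ : ℝ → Matrix (Fin m) (Fin m) ℂ)
    (hΦherm : ∀ θ, (Φ θ).IsHermitian)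
    (hΦint : ∀ i j, IntervalIntegrable
      (fun θ => (Gfil A B (Complex.exp (θ * Complex.I)) * Φ θ *
        (Gfil A B (Complex.exp (θ * Complex.I)))ᴴ) i j)
      MeasureTheory.volume (-π) π)
    (S : Matrix (Fin n) (Fin n) ℂ)
    (hS : ∀ i j, S i j =
      (1 / (2 * π)) * ∫ θ in (-π)..π,
        (Gfil A B (Complex.exp (θ * Complex.I)) * Φ θ *
          (Gfil A B (Complex.exp (θ * Complex.I)))ᴴ) i j) :
    ∃ H : Matrix (Fin m) (Fin n) ℂ,
      S - A.map Complex.ofReal * S * (A.map Complex.ofReal)ᵀ =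
        B.map Complex.ofReal * H + Hᴴ * (B.map Complex.ofReal)ᵀ := by
  classical
  set 𝔸 : Matrix (Fin n) (Fin n) ℂ := A.map Complex.ofReal with h𝔸
  set 𝔹 : Matrix (Fin n) (Fin m) ℂ := B.map Complex.ofReal with h𝔹
  set e : ℝ → ℂ := fun θ : ℝ => Complex.exp (θ * Complex.I) with he
  have heθ : ∀ θ : ℝ, Complex.exp (θ * Complex.I) = e θ := fun θ => rfl
  set Wf : ℝ → Matrix (Fin n) (Fin n) ℂ :=
    fun θ => Gfil A B (e θ) * Φ θ * (Gfil A B (e θ))ᴴ with hWfdef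
  have hWint : ∀ i j, IntervalIntegrable (fun θ => Wf θ i j)
      MeasureTheory.volume (-π) π := hΦint
  set c : ℂ := 1 / (2 * (π : ℂ)) with hc
  have hS' : ∀ i j, S i j = c * ∫ θ in (-π)..π, Wf θ i j := hS
  clear hS hΦint
  -- real-entry facts
  have h𝔸T : (𝔸ᵀ)ᴴ = 𝔸 := by
    ext i j
    simp [h𝔸, Matrix.conjTranspose_apply, Matrix.map_apply, Complex.conj_ofReal]
  have h𝔸H : 𝔸ᴴ = 𝔸ᵀ := by
    ext i j
    simp [h𝔸, Matrix.conjTranspose_apply, Matrix.map_apply, Complex.conj_ofReal]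
  have h𝔹H : 𝔹ᴴ = 𝔹ᵀ := by
    ext i j
    simp [h𝔹, Matrix.conjTranspose_apply, Matrix.map_apply, Complex.conj_ofReal]
  -- W is pointwise Hermitian
  have hWherm : ∀ θ, (Wf θ)ᴴ = Wf θ := by
    intro θ
    simp only [hWfdef]
    simp [Matrix.conjTranspose_mul, Matrix.mul_assoc, (hΦherm θ).eq]
  -- the pointwise factor
  set Hθ : ℝ → Matrix (Fin m) (Fin n) ℂ := fun θ =>
    (2 : ℂ)⁻¹ • (Φ θ * (Gfil A B (e θ))ᴴ * (1 + e θ • 𝔸ᵀ)) with hHθ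
  set Y : ℝ → Matrix (Fin n) (Fin n) ℂ := fun θ => 𝔹 * Hθ θ with hY
  -- basic facts about e θ
  have habs : ∀ θ : ℝ, ‖e θ‖ = 1 := fun θ => Complex.norm_exp_ofReal_mul_I θ
  have hzz : ∀ θ : ℝ, (starRingEnd ℂ) (e θ) * e θ = 1 := by
    intro θ
    rw [mul_comm, Complex.mul_conj]
    norm_cast
    simp [Complex.normSq_eq_norm_sq, habs θ]
  -- key pointwise identity
  have key : ∀ θ : ℝ, Y θ = (2 : ℂ)⁻¹ •
      (Wf θ + e θ • (Wf θ * 𝔸ᵀ) - (starRingEnd ℂ) (e θ) • (𝔸 * Wf θ)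
        - 𝔸 * Wf θ * 𝔸ᵀ) := by
    intro θ
    have hzmem : e θ ∉ spectrum ℂ 𝔸 := by
      intro hmem
      have := hA (e θ) hmem
      rw [habs θ] at this
      exact lt_irrefl 1 this
    have hunit : IsUnit (e θ • (1 : Matrix (Fin n) (Fin n) ℂ) - 𝔸) := by
      have := spectrum.notMem_iff.mp hzmem
      rwa [Algebra.algebraMap_eq_smul_one] at this
    set N : Matrix (Fin n) (Fin n) ℂ := e θ • (1 : Matrix (Fin n) (Fin n) ℂ) - 𝔸 with hN
    have hNdet : IsUnit N.det := (Matrix.isUnit_iff_isUnit_det N).mp hunit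
    have hNN : N * N⁻¹ = 1 := Matrix.mul_nonsing_inv N hNdet
    have hG : N * Gfil A B (e θ) = e θ • 𝔹 := by
      have : Gfil A B (e θ) = e θ • N⁻¹ * 𝔹 := by
        rw [Gfil, hN, h𝔸, h𝔹]
      rw [this, ← Matrix.mul_assoc, Matrix.mul_smul, hNN, Matrix.smul_mul,
        Matrix.one_mul]
    have hNW : N * Wf θ = e θ • (𝔹 * (Φ θ * (Gfil A B (e θ))ᴴ)) := by
      have hW' : Wf θ = Gfil A B (e θ) * Φ θ * (Gfil A B (e θ))ᴴ := rfl
      rw [hW', ← Matrix.mul_assoc, ← Matrix.mul_assoc, hG, Matrix.smul_mul,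
        Matrix.smul_mul, Matrix.mul_assoc]
    have hBP : 𝔹 * (Φ θ * (Gfil A B (e θ))ᴴ) = (starRingEnd ℂ) (e θ) • (N * Wf θ) := by
      rw [hNW, smul_smul, hzz θ, one_smul]
    have := key_alg 𝔸 N (Wf θ) 𝔹 (Φ θ * (Gfil A B (e θ))ᴴ) (e θ) (hzz θ) hN hBP
    exact this
  -- pointwise Hermitian-part identity
  have pointHerm : ∀ θ : ℝ, Y θ + (Y θ)ᴴ = Wf θ - 𝔸 * Wf θ * 𝔸ᵀ := by
    intro θ
    exact herm_alg 𝔸 (Wf θ) (Y θ) (e θ) (hWherm θ) h𝔸T h𝔸H (key θ)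
  -- generic entry expansion
  have hent : ∀ (C D M : Matrix (Fin n) (Fin n) ℂ) (i j : Fin n),
      (C * M * D) i j = ∑ l, ∑ k, C i k * M k l * D l j := by
    intro C D M i j
    rw [Matrix.mul_apply]
    refine Finset.sum_congr rfl fun l _ => ?_
    rw [Matrix.mul_apply, Finset.sum_mul]
  have hCWD_int : ∀ (C D : Matrix (Fin n) (Fin n) ℂ) (i j : Fin n),
      IntervalIntegrable (fun θ => (C * Wf θ * D) i j)
        MeasureTheory.volume (-π) π := by
    intro C D i j
    have hfe : (fun θ => (C * Wf θ * D) i j)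
        = fun θ => ∑ l, ∑ k, C i k * Wf θ k l * D l j := by
      funext θ
      exact hent C D (Wf θ) i j
    rw [hfe]
    have : ∀ l : Fin n, IntervalIntegrable (fun θ => ∑ k, C i k * Wf θ k l * D l j)
        MeasureTheory.volume (-π) π := by
      intro l
      have := IntervalIntegrable.sum (μ := MeasureTheory.volume) (a := -π) (b := π)
        Finset.univ (f := fun k (θ : ℝ) => C i k * Wf θ k l * D l j)
        (fun k _ => ((hWint k l).const_mul (C i k)).mul_const (D l j))
      apply this.congr_ae
      filter_upwards with θ
      simp [Finset.sum_apply]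
    have := IntervalIntegrable.sum (μ := MeasureTheory.volume) (a := -π) (b := π)
      Finset.univ (f := fun l (θ : ℝ) => ∑ k, C i k * Wf θ k l * D l j)
      (fun l _ => this l)
    apply this.congr_ae
    filter_upwards with θ
    simp [Finset.sum_apply]
  -- T : the matrix of integrals
  set T : Matrix (Fin n) (Fin n) ℂ :=
    Matrix.of (fun i j => ∫ θ in (-π)..π, Wf θ i j) with hT
  have hCWD_val : ∀ (C D : Matrix (Fin n) (Fin n) ℂ) (i j : Fin n),
      (∫ θ in (-π)..π, (C * Wf θ * D) i j) = (C * T * D) i j := by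
    intro C D i j
    have hterm : ∀ (k l : Fin n), IntervalIntegrable
        (fun θ => C i k * Wf θ k l * D l j) MeasureTheory.volume (-π) π :=
      fun k l => ((hWint k l).const_mul (C i k)).mul_const (D l j)
    have hinner : ∀ l : Fin n, IntervalIntegrable
        (fun θ => ∑ k, C i k * Wf θ k l * D l j) MeasureTheory.volume (-π) π := by
      intro l
      have h := IntervalIntegrable.sum (μ := MeasureTheory.volume) (a := -π) (b := π)
        Finset.univ (f := fun k (θ : ℝ) => C i k * Wf θ k l * D l j)
        (fun k _ => hterm k l)
      apply h.congr_ae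
      filter_upwards with θ
      simp [Finset.sum_apply]
    calc (∫ θ in (-π)..π, (C * Wf θ * D) i j)
        = ∫ θ in (-π)..π, ∑ l, ∑ k, C i k * Wf θ k l * D l j := by
          congr 1
          funext θ
          exact hent C D (Wf θ) i j
      _ = ∑ l, ∫ θ in (-π)..π, ∑ k, C i k * Wf θ k l * D l j :=
          intervalIntegral.integral_finset_sum (fun l _ => hinner l)
      _ = ∑ l, ∑ k, ∫ θ in (-π)..π, C i k * Wf θ k l * D l j := by
          refine Finset.sum_congr rfl fun l _ => ?_
          exact intervalIntegral.integral_finset_sum (fun k _ => hterm k l)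
      _ = ∑ l, ∑ k, C i k * (∫ θ in (-π)..π, Wf θ k l) * D l j := by
          refine Finset.sum_congr rfl fun l _ => Finset.sum_congr rfl fun k _ => ?_
          rw [intervalIntegral.integral_mul_const, intervalIntegral.integral_const_mul]
      _ = (C * T * D) i j := (hent C D T i j).symm
  -- integrability of entries of Y
  have hcontE : ContinuousOn e (Set.uIcc (-π) π) := by
    apply Continuous.continuousOn
    exact Complex.continuous_exp.comp ((Complex.continuous_ofReal).mul continuous_const)
  have hcontE' : ContinuousOn (fun θ => (starRingEnd ℂ) (e θ)) (Set.uIcc (-π) π) :=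
    Complex.continuous_conj.comp_continuousOn hcontE
  have hYint : ∀ i j, IntervalIntegrable (fun θ => Y θ i j)
      MeasureTheory.volume (-π) π := by
    intro i j
    have hexp : ∀ θ : ℝ, Y θ i j = (2 : ℂ)⁻¹ *
        ((1 * Wf θ * 1 : Matrix (Fin n) (Fin n) ℂ) i j + e θ * (1 * Wf θ * 𝔸ᵀ : Matrix (Fin n) (Fin n) ℂ) i j
          - (starRingEnd ℂ) (e θ) * (𝔸 * Wf θ * 1 : Matrix (Fin n) (Fin n) ℂ) i j - (𝔸 * Wf θ * 𝔸ᵀ) i j) := by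
      intro θ
      rw [key θ]
      simp [Matrix.sub_apply, Matrix.add_apply, Matrix.smul_apply, smul_eq_mul,
        Matrix.one_mul, Matrix.mul_one]
    have h1 := hCWD_int 1 1 i j
    have h2 := (hCWD_int 1 𝔸ᵀ i j).continuousOn_mul hcontE
    have h3 := (hCWD_int 𝔸 1 i j).continuousOn_mul hcontE'
    have h4 := hCWD_int 𝔸 𝔸ᵀ i j
    have h5 := (((h1.add h2).sub h3).sub h4).const_mul ((2:ℂ)⁻¹)
    apply h5.congr_ae
    filter_upwards with θ
    rw [hexp θ]
  -- the matrix Z of integrals of Y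
  set Z : Matrix (Fin n) (Fin n) ℂ :=
    Matrix.of (fun i j => ∫ θ in (-π)..π, Y θ i j) with hZ
  -- conj commutes with the interval integral
  have hconj : ∀ f : ℝ → ℂ, (starRingEnd ℂ) (∫ θ in (-π)..π, f θ)
      = ∫ θ in (-π)..π, (starRingEnd ℂ) (f θ) := by
    intro f
    simp only [intervalIntegral]
    rw [map_sub, ← _root_.integral_conj, ← _root_.integral_conj]
  -- Z + Zᴴ = T - 𝔸 T 𝔸ᵀ
  have hZherm : Z + Zᴴ = T - 𝔸 * T * 𝔸ᵀ := by
    ext i j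
    have hZji : Zᴴ i j = ∫ θ in (-π)..π, (starRingEnd ℂ) (Y θ j i) := by
      rw [Matrix.conjTranspose_apply]
      exact hconj _
    have hptwise : ∀ θ : ℝ, (starRingEnd ℂ) (Y θ j i)
        = (Wf θ - 𝔸 * Wf θ * 𝔸ᵀ) i j - Y θ i j := by
      intro θ
      have h0 : (Y θ)ᴴ = (Wf θ - 𝔸 * Wf θ * 𝔸ᵀ) - Y θ :=
        eq_sub_of_add_eq' (pointHerm θ)
      have h1 := congrFun (congrFun h0 i) j
      rw [Matrix.conjTranspose_apply] at h1
      exact h1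
    have hint2 : IntervalIntegrable
        (fun θ => (Wf θ - 𝔸 * Wf θ * 𝔸ᵀ) i j) MeasureTheory.volume (-π) π := by
      have h1 := hCWD_int 1 1 i j
      have h4 := hCWD_int 𝔸 𝔸ᵀ i j
      apply (h1.sub h4).congr_ae
      filter_upwards with θ
      simp [Matrix.sub_apply]
    have hZH : Zᴴ i j = (∫ θ in (-π)..π, (Wf θ - 𝔸 * Wf θ * 𝔸ᵀ) i j)
        - Z i j := by
      rw [hZji]
      rw [show (fun θ => (starRingEnd ℂ) (Y θ j i))
        = fun θ => (Wf θ - 𝔸 * Wf θ * 𝔸ᵀ) i j - Y θ i j from funext hptwise]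
      exact intervalIntegral.integral_sub hint2 (hYint i j)
    have hval : (∫ θ in (-π)..π, (Wf θ - 𝔸 * Wf θ * 𝔸ᵀ) i j)
        = T i j - (𝔸 * T * 𝔸ᵀ) i j := by
      have h1 := hCWD_int 1 1 i j
      have h4 := hCWD_int 𝔸 𝔸ᵀ i j
      have hsplit : (∫ θ in (-π)..π, (Wf θ - 𝔸 * Wf θ * 𝔸ᵀ) i j)
          = (∫ θ in (-π)..π, (1 * Wf θ * 1 : Matrix (Fin n) (Fin n) ℂ) i j)
            - ∫ θ in (-π)..π, (𝔸 * Wf θ * 𝔸ᵀ) i j := by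
        rw [← intervalIntegral.integral_sub h1 h4]
        congr 1
        funext θ
        simp [Matrix.sub_apply]
      rw [hsplit, hCWD_val 1 1 i j, hCWD_val 𝔸 𝔸ᵀ i j]
      simp
    rw [Matrix.add_apply, hZH, hval, Matrix.sub_apply]
    ring
  -- annihilation property of Z
  have hZann : ∀ u : Fin n → ℂ, u ᵥ* 𝔹 = 0 → u ᵥ* Z = 0 := by
    intro u hu
    funext j
    have h1 : (u ᵥ* Z) j = ∑ i, u i * ∫ θ in (-π)..π, Y θ i j := by
      simp [Matrix.vecMul, dotProduct, hZ]
    rw [h1]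
    have hswap : ∀ i : Fin n, u i * (∫ θ in (-π)..π, Y θ i j)
        = ∫ θ in (-π)..π, u i * Y θ i j := by
      intro i
      rw [intervalIntegral.integral_const_mul]
    simp_rw [hswap]
    rw [← intervalIntegral.integral_finset_sum (fun i _ => (hYint i j).const_mul (u i))]
    have hz0 : ∀ θ : ℝ, ∑ i, u i * Y θ i j = 0 := by
      intro θ
      have h0 : (u ᵥ* Y θ) j = 0 := by
        have : u ᵥ* Y θ = (u ᵥ* 𝔹) ᵥ* Hθ θ := by
          rw [hY]
          exact (Matrix.vecMul_vecMul u 𝔹 (Hθ θ)).symm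
        rw [this, hu, Matrix.zero_vecMul]
        rfl
      simpa [Matrix.vecMul, dotProduct] using h0
    simp only [hz0]
    simp
  -- Now assemble.
  have hSmat : S = c • T := by
    ext i j
    rw [hS' i j]
    rfl
  have hstar_c : (starRingEnd ℂ) c = c := by
    rw [hc]
    rw [map_div₀, _root_.map_one, _root_.map_mul, Complex.conj_ofReal]
    norm_num
    rw [map_ofNat]
    norm_num
  have hfinal : S - 𝔸 * S * 𝔸ᵀ = (c • Z) + (c • Z)ᴴ := by
    rw [hSmat]
    have hmul : 𝔸 * (c • T) * 𝔸ᵀ = c • (𝔸 * T * 𝔸ᵀ) := by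
      rw [Matrix.mul_smul, Matrix.smul_mul]
    rw [hmul, ← smul_sub, ← hZherm]
    rw [Matrix.conjTranspose_smul]
    rw [show (star c : ℂ) = c from hstar_c]
    rw [← smul_add]
  obtain ⟨H, hH⟩ := factor_through_matrix 𝔹 (c • Z) (by
    intro u hu
    have h0 := hZann u hu
    have hsm : u ᵥ* (c • Z) = c • (u ᵥ* Z) := by
      funext j
      simp only [Matrix.vecMul, dotProduct, Matrix.smul_apply, smul_eq_mul,
        Pi.smul_apply]
      rw [Finset.mul_sum]
      exact Finset.sum_congr rfl fun _ _ => by ring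
    rw [hsm, h0, smul_zero])
  refine ⟨H, ?_⟩
  rw [hfinal, hH, Matrix.conjTranspose_mul, h𝔹H]
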